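/- Under hypotheses (H1)–(H3), any two monoidal natural transformations from Z to Z' are equal; consequently the monoidal natural isomorphism Z ≅ Z' is unique. -/

import Mathlib

open CategoryTheory MonoidalCategory

universe v u

/-- The distinguished vector `ε_Z(1) ∈ Z(𝟙)` determined by the unit isomorphism
`ε_Z : k ≅ Z(𝟙)` of a (strong) monoidal functor `Z : C ⥤ ModuleCat k`. -/
noncomputable def unitVec {k : Type*} [Field k] {C : Type u} [Category.{v} C]
    [MonoidalCategory C] (Z : C ⥤ ModuleCat k) [Z.Monoidal] : Z.obj (𝟙_ C) :=
  Functor.LaxMonoidal.ε Z (1 : k)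

/-- Under (H1)–(H3), any two monoidal natural transformations `Z ⟶ Z'` coincide; in
particular any two monoidal natural isomorphisms `Z ≅ Z'` coincide. -/
theorem monoidal_nat_trans_unique {k : Type*} [Field k] {C : Type u} [Category.{v} C]
    [MonoidalCategory C] (Z Z' : C ⥤ ModuleCat k) [Z.Monoidal] [Z'.Monoidal]
    -- (H1): every object admits a morphism from and a morphism to the unit object
    (H1 : ∀ X : C, Nonempty (𝟙_ C ⟶ X) ∧ Nonempty (X ⟶ 𝟙_ C))
    -- (H2): for every `f : 𝟙 ⟶ 𝟙` the scalars `⟨Z(f)⟩` and `⟨Z'(f)⟩` agree and are nonzero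
    (H2 : ∀ f : 𝟙_ C ⟶ 𝟙_ C, ∃ c : k, c ≠ 0 ∧
      Z.map f (unitVec Z) = c • unitVec Z ∧ Z'.map f (unitVec Z') = c • unitVec Z')
    -- (H3): all state spaces are one-dimensional
    (H3 : ∀ X : C, Module.finrank k (Z.obj X) = 1 ∧ Module.finrank k (Z'.obj X) = 1) :
    (∀ θ₁ θ₂ : Z ⟶ Z', NatTrans.IsMonoidal θ₁ → NatTrans.IsMonoidal θ₂ → θ₁ = θ₂) ∧
    (∀ F₁ F₂ : Z ≅ Z', NatTrans.IsMonoidal F₁.hom → NatTrans.IsMonoidal F₂.hom →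
      F₁ = F₂) := by
  -- the unit vector of Z is nonzero
  have huZ : unitVec Z ≠ 0 := by
    intro h
    have h2 : (Functor.Monoidal.εIso Z).inv (unitVec Z) = (1 : k) := by
      show ((Functor.Monoidal.εIso Z).hom ≫ (Functor.Monoidal.εIso Z).inv) (1 : k) = 1
      rw [Iso.hom_inv_id]; rfl
    rw [h, map_zero] at h2
    exact one_ne_zero h2.symm
  -- uniqueness of monoidal natural transformations
  have key : ∀ θ₁ θ₂ : Z ⟶ Z', NatTrans.IsMonoidal θ₁ → NatTrans.IsMonoidal θ₂ → θ₁ = θ₂ := by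
    intro θ₁ θ₂ h₁ h₂
    -- both send unitVec Z to unitVec Z'
    have hunit : ∀ (θ : Z ⟶ Z'), NatTrans.IsMonoidal θ →
        θ.app (𝟙_ C) (unitVec Z) = unitVec Z' := by
      intro θ hθ
      show (Functor.LaxMonoidal.ε Z ≫ θ.app (𝟙_ C)) (1 : k) = unitVec Z'
      rw [hθ.unit]; rfl
    ext X v
    obtain ⟨⟨M⟩, ⟨N⟩⟩ := H1 X
    obtain ⟨c, hc, hcZ, -⟩ := H2 (M ≫ N)
    set w : Z.obj X := Z.map M (unitVec Z) with hw
    have hwne : w ≠ 0 := by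
      intro h
      have : Z.map (M ≫ N) (unitVec Z) = 0 := by
        rw [Z.map_comp]
        show Z.map N (Z.map M (unitVec Z)) = 0
        rw [← hw, h, map_zero]
      rw [this] at hcZ
      exact huZ (by
        have := hcZ.symm
        exact (smul_eq_zero.mp this).resolve_left hc)
    -- w spans Z.obj X
    have hspan : Submodule.span k {w} = ⊤ := by
      rcases (finrank_eq_one_iff_of_nonzero w hwne).mp (H3 X).1 with h
      exact h
    obtain ⟨a, ha⟩ : ∃ a : k, a • w = v := by
      have : v ∈ Submodule.span k {w} := by rw [hspan]; trivial
      exact Submodule.mem_span_singleton.mp this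
    have hagree : ∀ (θ : Z ⟶ Z'), NatTrans.IsMonoidal θ →
        θ.app X w = Z'.map M (unitVec Z') := by
      intro θ hθ
      have := congrArg (fun f => f (unitVec Z)) (θ.naturality M)
      simp only [CategoryTheory.comp_apply, Function.comp_apply] at this
      rw [hw]
      refine this.trans ?_
      rw [hunit θ hθ]
    rw [← ha, map_smul, map_smul, hagree θ₁ h₁, hagree θ₂ h₂]
  exact ⟨key, fun F₁ F₂ m₁ m₂ => Iso.ext (key F₁.hom F₂.hom m₁ m₂)⟩
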